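/- Let X be a compact metric space, let (x_i) and (x'_i) be sequences of points of X, and let (p_i) be a fast growing sequence. Suppose both L((x_i)) and L((x'_i)) contain at least two points, and let f be a conjugacy from (O̅(z((p_i),(x_i))),S) to (O̅(z((p_i),(x'_i))),S). Then f maps Toeplitz sequences to Toeplitz sequences: if y ∈ O̅(z((p_i),(x_i))) satisfies Per(y) = ℤ, then Per(f(y)) = ℤ. -/

import Mathlib

open Filter Topology

section Defs

variable {X : Type*}

/-- The shift by `m`: `(shiftZ m z) n = z (n + m)`, so `shiftZ 1` is the left shift `S`
and `shiftZ m = S^m`. -/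
def shiftZ (m : ℤ) (z : ℤ → X) : ℤ → X := fun n => z (n + m)

/-- `Per_p(z)`: the set of positions `n` such that `z m = z n` for all `m ≡ n (mod p)`. -/
def PerSet (p : ℕ) (z : ℤ → X) : Set ℤ :=
  {n : ℤ | ∀ m : ℤ, (p : ℤ) ∣ m - n → z m = z n}

/-- `Per(z) = ⋃_{p ≥ 1} Per_p(z)`. -/
def PerFull (z : ℤ → X) : Set ℤ := {n : ℤ | ∃ p : ℕ, 1 ≤ p ∧ n ∈ PerSet p z}

/-- A Toeplitz sequence: every position is periodic. -/
def IsToeplitz (z : ℤ → X) : Prop := ∀ n : ℤ, n ∈ PerFull z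

/-- A non-periodic sequence: `S^m z ≠ z` for all `m ≠ 0`. -/
def NonPeriodicSeq (z : ℤ → X) : Prop := ∀ m : ℤ, m ≠ 0 → shiftZ m z ≠ z

/-- `u` and `v` have the same `p`-skeleton. -/
def SamePSkeleton (p : ℕ) (u v : ℤ → X) : Prop :=
  PerSet p u = PerSet p v ∧ ∀ n ∈ PerSet p u, u n = v n

/-- A period structure of a (non-periodic) Toeplitz sequence `z`. -/
def IsPeriodStructure (p : ℕ → ℕ) (z : ℤ → X) : Prop :=
  (∀ i, 1 ≤ p i) ∧
  (∀ i q, 1 ≤ q → q < p i → PerSet q z ≠ PerSet (p i) z) ∧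
  (∀ i, p i ∣ p (i + 1)) ∧
  (∀ n : ℤ, ∃ i, n ∈ PerSet (p i) z)

/-- A fast growing sequence of positive integers. -/
def FastGrowing (p : ℕ → ℕ) : Prop :=
  p 0 = 1 ∧ (∀ i, p i ∣ p (i + 1)) ∧ 3 ≤ p 1 ∧ ∀ i, 3 * p i ≤ p (i + 1)

/-- `oxDefined p i` is the set of positions of the Oxtoby sequence that are filled in
after step `i` of the inductive construction (step `i+1` fills, for each `k ≡ 0` or
`-1 (mod p_{i+1}/p_i)`, the still-empty positions `J(i,k)` of the block
`[k p_i, (k+1) p_i)`). -/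
def oxDefined (p : ℕ → ℕ) : ℕ → Set ℤ
  | 0 => ∅
  | i + 1 =>
      oxDefined p i ∪
        {n : ℤ | ∃ k : ℤ,
          (((p (i + 1) / p i : ℕ) : ℤ) ∣ k ∨ ((p (i + 1) / p i : ℕ) : ℤ) ∣ (k + 1)) ∧
          k * (p i : ℤ) ≤ n ∧ n < (k + 1) * (p i : ℤ) ∧ n ∉ oxDefined p i}

/-- `J(i,k)`: the set of positions in `[k p_i, (k+1) p_i)` still undefined after step `i`. -/
def oxJ (p : ℕ → ℕ) (i : ℕ) (k : ℤ) : Set ℤ :=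
  {n : ℤ | k * (p i : ℤ) ≤ n ∧ n < (k + 1) * (p i : ℤ) ∧ n ∉ oxDefined p i}

/-- The Oxtoby sequence `z((p_i),(x_i))`: position `n` receives the value `x_i` where `i`
is the first step after which `n` is defined. -/
noncomputable def oxtoby (p : ℕ → ℕ) (x : ℕ → X) : ℤ → X :=
  fun n => x (sInf {i : ℕ | n ∈ oxDefined p i})

/-- The reverse of a bi-infinite sequence: `x⁻¹(n) = x(-n)`. -/
def revSeq (z : ℤ → X) : ℤ → X := fun n => z (-n)

/-- `[n0, n1]` is a maximal `p`-periodic block in `x`. -/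
def IsMaxPeriodicBlock (p : ℕ) (x : ℤ → X) (n0 n1 : ℤ) : Prop :=
  n0 ≤ n1 ∧ Set.Icc n0 n1 ⊆ PerSet p x ∧
    ∀ n0' n1' : ℤ, n0' ≤ n0 → n1 ≤ n1' → Set.Icc n0' n1' ⊆ PerSet p x →
      n0' = n0 ∧ n1' = n1

variable [TopologicalSpace X]

/-- The orbit closure of `z` in `X^ℤ` with the product topology. -/
def orbitClosure (z : ℤ → X) : Set (ℤ → X) :=
  closure {y : ℤ → X | ∃ m : ℤ, y = shiftZ m z}

/-- The ω-limit set of a sequence: all limits of convergent subsequences. -/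
def omegaLimitSet (x : ℕ → X) : Set X :=
  {a : X | ∃ φ : ℕ → ℕ, StrictMono φ ∧ Tendsto (x ∘ φ) atTop (𝓝 a)}

/-- Two sequences have the same topological type if exactly the same subsequences
converge. -/
def SameTopType {Y : Type*} [TopologicalSpace Y] (x : ℕ → X) (y : ℕ → Y) : Prop :=
  ∀ φ : ℕ → ℕ, StrictMono φ →
    ((∃ a, Tendsto (x ∘ φ) atTop (𝓝 a)) ↔ (∃ a, Tendsto (y ∘ φ) atTop (𝓝 a)))

/-- `f` is a conjugacy between the shift-invariant sets `A` and `B`: a homeomorphism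
from `A` onto `B` commuting with the shift. -/
def IsConjugacy (A B : Set (ℤ → X)) (f : (ℤ → X) → (ℤ → X)) : Prop :=
  Set.MapsTo f A B ∧ ContinuousOn f A ∧
    (∃ g : (ℤ → X) → (ℤ → X), Set.MapsTo g B A ∧ ContinuousOn g B ∧
      (∀ a ∈ A, g (f a) = a) ∧ (∀ b ∈ B, f (g b) = b)) ∧
    ∀ a ∈ A, f (shiftZ 1 a) = shiftZ 1 (f a)

/-- The `m`-th iterate (for `m : ℤ`) of a self-homeomorphism. -/
def iterZ {Y : Type*} [TopologicalSpace Y] (f : Y ≃ₜ Y) (m : ℤ) (a : Y) : Y :=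
  ((f.toEquiv ^ m : Equiv.Perm Y)) a

end Defs

namespace OxHelp

variable {X : Type*}

theorem shiftZ_shiftZ (a b : ℤ) (z : ℤ → X) : shiftZ a (shiftZ b z) = shiftZ (b + a) z := by
  funext n
  show z (n + a + b) = z (n + (b + a))
  ring_nf

theorem shiftZ_zero (z : ℤ → X) : shiftZ 0 z = z := by
  funext n; show z (n + 0) = z n; rw [add_zero]

theorem p_pos {p : ℕ → ℕ} (hp : FastGrowing p) : ∀ i, 0 < p i := by
  intro i
  induction i with
  | zero => rw [hp.1]; norm_num
  | succ i ih => have := hp.2.2.2 i; omega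

theorem p_dvd {p : ℕ → ℕ} (hp : FastGrowing p) {i j : ℕ} (h : i ≤ j) : p i ∣ p j := by
  induction h with
  | refl => exact dvd_rfl
  | step h ih => exact ih.trans (hp.2.1 _)

theorem p_ge {p : ℕ → ℕ} (hp : FastGrowing p) : ∀ i, i + 1 ≤ p i := by
  intro i
  induction i with
  | zero => rw [hp.1]
  | succ i ih => have := hp.2.2.2 i; omega

theorem D_succ (p : ℕ → ℕ) (i : ℕ) : oxDefined p (i+1) = oxDefined p i ∪
        {n : ℤ | ∃ k : ℤ,
          (((p (i + 1) / p i : ℕ) : ℤ) ∣ k ∨ ((p (i + 1) / p i : ℕ) : ℤ) ∣ (k + 1)) ∧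
          k * (p i : ℤ) ≤ n ∧ n < (k + 1) * (p i : ℤ) ∧ n ∉ oxDefined p i} := rfl

theorem D_mono (p : ℕ → ℕ) (i : ℕ) : oxDefined p i ⊆ oxDefined p (i+1) := by
  rw [D_succ]; exact Set.subset_union_left

theorem D_mono_le {p : ℕ → ℕ} {i j : ℕ} (h : i ≤ j) : oxDefined p i ⊆ oxDefined p j := by
  induction h with
  | refl => exact subset_rfl
  | step h ih => exact ih.trans (D_mono p _)

theorem D_add {p : ℕ → ℕ} (hp : FastGrowing p) :
    ∀ (i : ℕ) (n t : ℤ), n ∈ oxDefined p i → n + t * (p i : ℤ) ∈ oxDefined p i := by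
  intro i
  induction i with
  | zero => intro n t h; exact absurd h (by simp [oxDefined])
  | succ i ih =>
    intro n t h
    have hq : (p (i+1) : ℤ) = ((p (i+1) / p i : ℕ) : ℤ) * (p i : ℤ) := by
      rw [← Nat.cast_mul]
      congr 1
      rw [Nat.div_mul_cancel (hp.2.1 i)]
    set q : ℤ := ((p (i+1) / p i : ℕ) : ℤ) with hqdef
    rcases h with h | ⟨k, hk, h1, h2, h3⟩
    · left
      have e : n + t * (p (i+1):ℤ) = n + (t * q) * (p i:ℤ) := by rw [hq]; ring
      rw [e]; exact ih n _ h
    · right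
      refine ⟨k + t * q, ?_, ?_, ?_, ?_⟩
      · rcases hk with hk | hk
        · exact Or.inl (dvd_add hk (Dvd.intro t (by ring)))
        · refine Or.inr ?_
          have : k + t * q + 1 = (k + 1) + t * q := by ring
          rw [this]
          exact dvd_add hk (Dvd.intro t (by ring))
      · have e : (k + t * q) * (p i:ℤ) = k * (p i:ℤ) + t * (p (i+1):ℤ) := by rw [hq]; ring
        rw [e]; linarith
      · have e : (k + t * q + 1) * (p i:ℤ) = (k + 1) * (p i:ℤ) + t * (p (i+1):ℤ) := by rw [hq]; ring
        rw [e]; linarith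
      · intro hc
        apply h3
        have h4 := ih _ (-(t*q)) hc
        have e : n + t * (p (i+1):ℤ) + (-(t*q)) * (p i:ℤ) = n := by rw [hq]; ring
        rwa [e] at h4

theorem D_add_le {p : ℕ → ℕ} (hp : FastGrowing p) {i j : ℕ} (h : j ≤ i) {n : ℤ}
    (hn : n ∈ oxDefined p j) (t : ℤ) : n + t * (p i : ℤ) ∈ oxDefined p j := by
  obtain ⟨c, hc⟩ := p_dvd hp h
  have e : n + t * (p i:ℤ) = n + (t * c) * (p j:ℤ) := by
    rw [hc]; push_cast; ring
  rw [e]; exact D_add hp j n _ hn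

theorem D_total {p : ℕ → ℕ} (hp : FastGrowing p) (n : ℤ) : ∃ i, n ∈ oxDefined p i := by
  set i := n.natAbs with hidef
  have hpi : (n.natAbs : ℤ) < (p i : ℤ) := by exact_mod_cast p_ge hp i
  refine ⟨i + 1, ?_⟩
  by_cases h : n ∈ oxDefined p i
  · exact D_mono p i h
  rw [D_succ]
  rcases le_or_gt 0 n with h0 | h0
  · right
    refine ⟨0, Or.inl (dvd_zero _), by simpa using h0, ?_, h⟩
    have : n ≤ (n.natAbs : ℤ) := Int.le_natAbs
    simpa using lt_of_le_of_lt this hpi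
  · right
    refine ⟨-1, Or.inr (by norm_num), ?_, by simpa using h0, h⟩
    have h1 : -(n.natAbs : ℤ) ≤ n := by
      rw [← Int.abs_eq_natAbs]
      exact neg_abs_le n
    have : -(p i : ℤ) ≤ -(n.natAbs : ℤ) := by omega
    simpa using le_trans this h1

noncomputable def oxStep (p : ℕ → ℕ) (n : ℤ) : ℕ := sInf {i : ℕ | n ∈ oxDefined p i}

theorem oxtoby_apply (p : ℕ → ℕ) (x : ℕ → X) (n : ℤ) : oxtoby p x n = x (oxStep p n) := rfl

theorem oxStep_mem {p : ℕ → ℕ} (hp : FastGrowing p) (n : ℤ) : n ∈ oxDefined p (oxStep p n) :=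
  Nat.sInf_mem (D_total hp n)

theorem oxStep_le {p : ℕ → ℕ} {n : ℤ} {i : ℕ} (h : n ∈ oxDefined p i) : oxStep p n ≤ i :=
  Nat.sInf_le h

theorem oxStep_eq {p : ℕ → ℕ} {n : ℤ} {i : ℕ} (hi : n ∈ oxDefined p (i+1))
    (hni : n ∉ oxDefined p i) : oxStep p n = i + 1 := by
  refine le_antisymm (oxStep_le hi) ?_
  by_contra hlt
  push_neg at hlt
  have h1 : oxStep p n ≤ i := by omega
  have h2 : n ∈ oxDefined p (oxStep p n) := Nat.sInf_mem (⟨i+1, hi⟩ : Set.Nonempty {j | n ∈ oxDefined p j})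
  exact hni (D_mono_le h1 h2)

theorem oxStep_add {p : ℕ → ℕ} (hp : FastGrowing p) {n : ℤ} {i : ℕ}
    (hn : n ∈ oxDefined p i) (t : ℤ) : oxStep p (n + t * (p i : ℤ)) = oxStep p n := by
  have hs := oxStep_mem hp n
  have hsi : oxStep p n ≤ i := oxStep_le hn
  have h1 : n + t * (p i:ℤ) ∈ oxDefined p (oxStep p n) := D_add_le hp hsi hs t
  refine le_antisymm (oxStep_le h1) ?_
  by_contra h
  push_neg at h
  have h2 : n + t * (p i:ℤ) ∈ oxDefined p (oxStep p (n + t * (p i:ℤ))) := oxStep_mem hp _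
  have h3 := D_add_le hp (le_of_lt (lt_of_lt_of_le h hsi)) h2 (-t)
  have e : n + t * (p i:ℤ) + (-t) * (p i:ℤ) = n := by ring
  rw [e] at h3
  exact absurd (oxStep_le h3) (not_le.mpr h)

theorem ox_per {p : ℕ → ℕ} (hp : FastGrowing p) (x : ℕ → X) {n : ℤ} {i : ℕ}
    (hn : n ∈ oxDefined p i) {m : ℤ} (h : (p i : ℤ) ∣ m - n) : oxtoby p x m = oxtoby p x n := by
  obtain ⟨t, ht⟩ := h
  have hm : m = n + t * (p i:ℤ) := by
    have : (p i:ℤ) * t = t * (p i:ℤ) := mul_comm _ _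
    linarith
  rw [oxtoby_apply, oxtoby_apply, hm, oxStep_add hp hn t]

def Cset (p : ℕ → ℕ) (x' : ℕ → X) (i : ℕ) (r : ℤ) : Set (ℤ → X) :=
  {w | ∀ nn m : ℤ, nn + r ∈ oxDefined p i → (p i : ℤ) ∣ m - nn → w m = oxtoby p x' (nn + r)}

theorem isClosed_Cset [TopologicalSpace X] [T2Space X] (p : ℕ → ℕ) (x' : ℕ → X) (i : ℕ) (r : ℤ) :
    IsClosed (Cset p x' i r) := by
  have : Cset p x' i r = ⋂ (nn : ℤ), ⋂ (m : ℤ), ⋂ (_ : nn + r ∈ oxDefined p i),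
      ⋂ (_ : (p i:ℤ) ∣ m - nn), {w : ℤ → X | w m = oxtoby p x' (nn + r)} := by
    ext w
    simp only [Cset, Set.mem_iInter, Set.mem_setOf_eq]
  rw [this]
  exact isClosed_iInter fun nn => isClosed_iInter fun m => isClosed_iInter fun _ =>
    isClosed_iInter fun _ => isClosed_eq (continuous_apply m) continuous_const

theorem shift_mem_Cset {p : ℕ → ℕ} (hp : FastGrowing p) (x' : ℕ → X) (i : ℕ) (m : ℤ) :
    shiftZ m (oxtoby p x') ∈ Cset p x' i m := by
  intro nn mm hD hdvd
  show oxtoby p x' (mm + m) = oxtoby p x' (nn + m)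
  refine ox_per hp x' hD ?_
  have e : (mm + m) - (nn + m) = mm - nn := by ring
  rw [e]; exact hdvd

theorem Cset_shift {p : ℕ → ℕ} {x' : ℕ → X} {i : ℕ} {r : ℤ} {w : ℤ → X}
    (hw : w ∈ Cset p x' i r) (m : ℤ) : shiftZ m w ∈ Cset p x' i (r + m) := by
  intro nn mm hD hdvd
  show w (mm + m) = oxtoby p x' (nn + (r + m))
  have h1 : (nn + m) + r ∈ oxDefined p i := by
    rwa [show nn + m + r = nn + (r + m) by ring]
  have h2 : (p i:ℤ) ∣ (mm + m) - (nn + m) := by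
    rwa [show (mm + m) - (nn + m) = mm - nn by ring]
  have := hw (nn + m) (mm + m) h1 h2
  rwa [show nn + m + r = nn + (r + m) by ring] at this

theorem Cset_add {p : ℕ → ℕ} {x' : ℕ → X} {i : ℕ} {r : ℤ} {w : ℤ → X}
    (hw : w ∈ Cset p x' i r) (t : ℤ) : w ∈ Cset p x' i (r + t * (p i : ℤ)) := by
  intro nn mm hD hdvd
  have h1 : (nn + t * (p i:ℤ)) + r ∈ oxDefined p i := by
    rwa [show nn + t * (p i:ℤ) + r = nn + (r + t * (p i:ℤ)) by ring]
  have h2 : (p i:ℤ) ∣ mm - (nn + t * (p i:ℤ)) := by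
    have e : mm - (nn + t * (p i:ℤ)) = (mm - nn) + (-t) * (p i:ℤ) := by ring
    rw [e]
    exact dvd_add hdvd (dvd_mul_left _ _)
  have := hw _ mm h1 h2
  rwa [show nn + t * (p i:ℤ) + r = nn + (r + t * (p i:ℤ)) by ring] at this

theorem exists_Cset {p : ℕ → ℕ} (hp : FastGrowing p) [TopologicalSpace X] [T2Space X]
    {x' : ℕ → X} {w : ℤ → X} (hw : w ∈ orbitClosure (oxtoby p x')) (i : ℕ) :
    ∃ r : ℤ, w ∈ Cset p x' i r := by
  set T : Set (ℤ → X) := ⋃ r ∈ Finset.range (p i), Cset p x' i (r : ℤ) with hTdef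
  have hT : IsClosed T :=
    (Finset.range (p i)).finite_toSet.isClosed_biUnion fun r _ => isClosed_Cset p x' i _
  have hppos : (0:ℤ) < (p i : ℤ) := by exact_mod_cast p_pos hp i
  have horb : {y : ℤ → X | ∃ m : ℤ, y = shiftZ m (oxtoby p x')} ⊆ T := by
    rintro y ⟨m, rfl⟩
    have h1 := shift_mem_Cset hp x' i m
    have h2 := Cset_add h1 (-(m / (p i:ℤ)))
    set r₀ : ℕ := (m % (p i:ℤ)).toNat with hr₀def
    have hr₀ : (r₀ : ℤ) = m % (p i:ℤ) := Int.toNat_of_nonneg (Int.emod_nonneg _ (ne_of_gt hppos))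
    have hlt : r₀ < p i := by
      have : (r₀:ℤ) < (p i:ℤ) := by rw [hr₀]; exact Int.emod_lt_of_pos _ hppos
      exact_mod_cast this
    have e : m + (-(m / (p i:ℤ))) * (p i:ℤ) = (r₀:ℤ) := by
      rw [hr₀, Int.emod_def]; ring
    rw [e] at h2
    exact Set.mem_biUnion (Finset.mem_range.mpr hlt) h2
  have := closure_minimal horb hT hw
  rw [hTdef] at this
  obtain ⟨_, ⟨r, rfl⟩, _, ⟨hr, rfl⟩, hmem⟩ := this
  exact ⟨(r:ℤ), hmem⟩

theorem shiftZ_mem_orbitClosure [TopologicalSpace X] {z u : ℤ → X}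
    (hu : u ∈ orbitClosure z) (m : ℤ) : shiftZ m u ∈ orbitClosure z := by
  have hc : Continuous (shiftZ m : (ℤ → X) → ℤ → X) :=
    continuous_pi fun n => continuous_apply (n + m)
  have h1 : shiftZ m u ∈ shiftZ m '' closure {y : ℤ → X | ∃ k : ℤ, y = shiftZ k z} :=
    ⟨u, hu, rfl⟩
  have h2 := image_closure_subset_closure_image (s := {y : ℤ → X | ∃ k : ℤ, y = shiftZ k z}) hc h1
  refine closure_mono ?_ h2
  rintro y ⟨y', ⟨k, rfl⟩, rfl⟩
  exact ⟨k + m, shiftZ_shiftZ m k z⟩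

theorem conj_shift {A : Set (ℤ → X)} {f : (ℤ → X) → (ℤ → X)}
    (hfS : ∀ a ∈ A, f (shiftZ 1 a) = shiftZ 1 (f a))
    (hA : ∀ u ∈ A, ∀ m : ℤ, shiftZ m u ∈ A) :
    ∀ m : ℤ, ∀ a ∈ A, f (shiftZ m a) = shiftZ m (f a) := by
  intro m
  induction m using Int.induction_on with
  | zero => intro a ha; rw [shiftZ_zero, shiftZ_zero]
  | succ i ih =>
    intro a ha
    have h1 : shiftZ (i:ℤ) a ∈ A := hA a ha i
    calc f (shiftZ ((i:ℤ)+1) a) = f (shiftZ 1 (shiftZ (i:ℤ) a)) := by rw [shiftZ_shiftZ]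
      _ = shiftZ 1 (f (shiftZ (i:ℤ) a)) := hfS _ h1
      _ = shiftZ 1 (shiftZ (i:ℤ) (f a)) := by rw [ih a ha]
      _ = shiftZ ((i:ℤ)+1) (f a) := shiftZ_shiftZ 1 (i:ℤ) (f a)
  | pred i ih =>
    intro a ha
    have hb : shiftZ (-(i:ℤ) - 1) a ∈ A := hA a ha _
    have h1 : shiftZ 1 (shiftZ (-(i:ℤ)-1) a) = shiftZ (-(i:ℤ)) a := by
      rw [shiftZ_shiftZ]; norm_num
    have h2 := hfS _ hb
    rw [h1, ih a ha] at h2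
    have h3 := congrArg (shiftZ (-1)) h2
    rw [shiftZ_shiftZ, shiftZ_shiftZ] at h3
    norm_num at h3
    rw [shiftZ_zero] at h3
    exact h3.symm

theorem toeplitz_window {y : ℤ → X} (hy : IsToeplitz y) (N : ℕ) :
    ∃ Q : ℕ, 1 ≤ Q ∧ ∀ m : ℤ, |m| ≤ (N:ℤ) → ∀ k : ℤ, y (m + k * (Q:ℤ)) = y m := by
  choose q hq1 hq2 using hy
  refine ⟨∏ m ∈ Finset.Icc (-(N:ℤ)) (N:ℤ), q m,
    Finset.one_le_prod' fun m _ => hq1 m, ?_⟩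
  intro m hm k
  have hmF : m ∈ Finset.Icc (-(N:ℤ)) (N:ℤ) := Finset.mem_Icc.mpr (abs_le.mp hm)
  have hdvd : (q m : ℤ) ∣ ((∏ mm ∈ Finset.Icc (-(N:ℤ)) (N:ℤ), q mm : ℕ) : ℤ) := by
    exact_mod_cast Int.natCast_dvd_natCast.mpr (Finset.dvd_prod_of_mem q hmF)
  refine hq2 m (m + k * _) ?_
  rw [add_sub_cancel_left]
  exact Dvd.dvd.mul_left hdvd k

theorem key {p : ℕ → ℕ} (hp : FastGrowing p) {x' : ℕ → X} {w : ℤ → X} {n : ℤ} {i Q : ℕ} {r : ℤ}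
    (hQ1 : 1 ≤ Q) (hd : Nat.gcd Q (p i) = Nat.gcd Q (p (i+1)))
    (hC : w ∈ Cset p x' (i+1) r) (hnD : n + r ∉ oxDefined p (i+1)) :
    ∃ k : ℤ, w (n + k * (Q:ℤ)) = x' (i+1) := by
  set d := Nat.gcd Q (p i) with hddef
  have hdQ : d ∣ Q := Nat.gcd_dvd_left _ _
  have hdp : d ∣ p i := Nat.gcd_dvd_right _ _
  have hdpos : 0 < d := Nat.gcd_pos_of_pos_left _ hQ1
  obtain ⟨Q', hQ'⟩ := hdQ
  obtain ⟨P', hP'⟩ := hdp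
  set q' := p (i+1) / p i with hq'def
  have hpq : p (i+1) = p i * q' := (Nat.mul_div_cancel' (hp.2.1 i)).symm
  have hq'pos : 0 < q' := by
    rcases Nat.eq_zero_or_pos q' with h | h
    · exfalso; have := p_pos hp (i+1); rw [hpq, h, mul_zero] at this; omega
    · exact h
  have hcop : Nat.Coprime Q' q' := by
    have hg1 : Nat.gcd Q' q' ∣ Q' := Nat.gcd_dvd_left _ _
    have hg2 : Nat.gcd Q' q' ∣ q' := Nat.gcd_dvd_right _ _
    have he1 : d * Nat.gcd Q' q' ∣ Q := by
      rw [hQ']; exact mul_dvd_mul_left d hg1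
    have he2 : d * Nat.gcd Q' q' ∣ p (i+1) := by
      rw [hpq, hP']
      have : d * P' * q' = d * (P' * q') := by ring
      rw [this]
      exact mul_dvd_mul_left d (hg2.trans (dvd_mul_left _ _))
    have he3 : d * Nat.gcd Q' q' ∣ d := by
      have h7 := Nat.dvd_gcd he1 he2
      rwa [← hd] at h7
    have hle := Nat.le_of_dvd hdpos he3
    have hepos : 0 < Nat.gcd Q' q' := Nat.gcd_pos_of_pos_right _ hq'pos
    have : Nat.gcd Q' q' ≤ 1 := Nat.le_of_mul_le_mul_left (by simpa using hle) hdpos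
    exact Nat.le_antisymm this hepos
  have hicop : IsCoprime (Q' : ℤ) (q' : ℤ) := Nat.isCoprime_iff_coprime.mpr hcop
  obtain ⟨uu, vv, huv⟩ := hicop
  set K0 : ℤ := (n + r) / (p i : ℤ) with hK0
  set t : ℤ := -K0 * uu * (Q' : ℤ) with ht
  set k : ℤ := -K0 * uu * (P' : ℤ) with hk
  have hQcast : (Q:ℤ) = (d:ℤ) * (Q':ℤ) := by exact_mod_cast congrArg (Nat.cast (R := ℤ)) hQ'
  have hpcast : ((p i : ℕ):ℤ) = (d:ℤ) * (P':ℤ) := by exact_mod_cast congrArg (Nat.cast (R := ℤ)) hP'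
  have hQk : (Q:ℤ) * k = t * (p i : ℤ) := by
    rw [ht, hk, hQcast, hpcast]; ring
  have hppos : (0:ℤ) < (p i : ℤ) := by exact_mod_cast p_pos hp i
  have hdiv := Int.mul_ediv_add_emod (n + r) (p i : ℤ)
  have hmod0 : 0 ≤ (n + r) % (p i:ℤ) := Int.emod_nonneg _ (ne_of_gt hppos)
  have hmod1 : (n + r) % (p i:ℤ) < (p i:ℤ) := Int.emod_lt_of_pos _ hppos
  set m0 : ℤ := n + r + (Q:ℤ) * k with hm0
  have hm0i : m0 ∉ oxDefined p i := by
    intro hc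
    have h5 := D_add hp i m0 (-t) hc
    have h6 : m0 + (-t) * (p i:ℤ) = n + r := by rw [hm0, hQk]; ring
    rw [h6] at h5
    exact hnD (D_mono p i h5)
  have hdvdt : ((q':ℕ):ℤ) ∣ K0 + t := by
    refine ⟨K0 * vv, ?_⟩
    rw [ht]
    linear_combination (-K0) * huv
  have hm0e : m0 = (n + r) + t * (p i:ℤ) := by rw [hm0, hQk]
  have hbound1 : (K0 + t) * (p i:ℤ) ≤ m0 := by
    have e : (K0 + t) * (p i:ℤ) = (p i:ℤ) * K0 + t * (p i:ℤ) := by ring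
    rw [e, hm0e]
    linarith
  have hbound2 : m0 < (K0 + t + 1) * (p i:ℤ) := by
    have e : (K0 + t + 1) * (p i:ℤ) = (p i:ℤ) * K0 + t * (p i:ℤ) + (p i:ℤ) := by ring
    rw [e, hm0e]
    linarith
  have hm0mem : m0 ∈ oxDefined p (i+1) := by
    rw [D_succ]
    right
    exact ⟨K0 + t, Or.inl hdvdt, hbound1, hbound2, hm0i⟩
  have hstep : oxStep p m0 = i + 1 := oxStep_eq hm0mem hm0i
  refine ⟨k, ?_⟩
  have e1 : n + (Q:ℤ) * k + r = m0 := by rw [hm0]; ring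
  have h9 := hC (n + (Q:ℤ) * k) (n + (Q:ℤ) * k) (by rw [e1]; exact hm0mem) (by simp)
  rw [e1] at h9
  rw [show n + k * (Q:ℤ) = n + (Q:ℤ) * k by ring, h9, oxtoby_apply, hstep]

theorem gcd_stab {p : ℕ → ℕ} (hp : FastGrowing p) {Q : ℕ} (hQ : 1 ≤ Q) :
    ∃ S0 : ℕ, ∀ s, S0 ≤ s → Nat.gcd Q (p s) = Nat.gcd Q (p S0) := by
  have hbdd : BddAbove (Set.range fun s => Nat.gcd Q (p s)) := by
    refine ⟨Q, ?_⟩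
    rintro v ⟨s, rfl⟩
    exact Nat.le_of_dvd hQ (Nat.gcd_dvd_left _ _)
  obtain ⟨S0, hS0⟩ := Nat.sSup_mem (Set.range_nonempty _) hbdd
  refine ⟨S0, fun s hs => ?_⟩
  have h1 : Nat.gcd Q (p S0) ∣ Nat.gcd Q (p s) :=
    Nat.dvd_gcd (Nat.gcd_dvd_left _ _) ((Nat.gcd_dvd_right _ _).trans (p_dvd hp hs))
  have h2 : Nat.gcd Q (p s) ≤ Nat.gcd Q (p S0) := by
    have hS0' : Nat.gcd Q (p S0) = sSup (Set.range fun s => Nat.gcd Q (p s)) := hS0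
    rw [hS0']; exact le_csSup hbdd ⟨s, rfl⟩
  have h3 : 0 < Nat.gcd Q (p s) := Nat.gcd_pos_of_pos_left _ hQ
  exact le_antisymm h2 (Nat.le_of_dvd h3 h1)

end OxHelp

/-- Lemma `ToptoTop`: if `L((x_i))` and `L((x'_i))` both have at least two
points, any conjugacy between the corresponding Oxtoby systems maps Toeplitz sequences to
Toeplitz sequences. -/
theorem oxtoby_conjugacy_preserves_toeplitz {X : Type*} [MetricSpace X] [CompactSpace X]
    (x x' : ℕ → X) (p : ℕ → ℕ) (hp : FastGrowing p)
    (hL : (omegaLimitSet x).Nontrivial) (hL' : (omegaLimitSet x').Nontrivial)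
    (f : (ℤ → X) → (ℤ → X))
    (hf : IsConjugacy (orbitClosure (oxtoby p x)) (orbitClosure (oxtoby p x')) f) :
    ∀ y ∈ orbitClosure (oxtoby p x), IsToeplitz y → IsToeplitz (f y) := by
  intro y hy hyT
  obtain ⟨hmaps, hcont, -, hcomm⟩ := hf
  have hw : f y ∈ orbitClosure (oxtoby p x') := hmaps hy
  have hex : ∀ i, ∃ r : ℤ, f y ∈ OxHelp.Cset p x' i r := fun i => OxHelp.exists_Cset hp hw i
  choose g hg using hex
  intro n
  by_cases hcase : ∃ i, n + g i ∈ oxDefined p i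
  · obtain ⟨i, hi⟩ := hcase
    refine ⟨p i, OxHelp.p_pos hp i, fun m hm => ?_⟩
    have h1 := hg i n m hi hm
    have h2 := hg i n n hi (by simp)
    rw [h1, h2]
  · push_neg at hcase
    exfalso
    have hRR : ∀ ε : ℝ, 0 < ε →
        ∃ Q : ℕ, 1 ≤ Q ∧ ∀ k : ℤ, dist (f y (n + k * (Q:ℤ))) (f y n) < ε := by
      by_contra hno
      push_neg at hno
      obtain ⟨ε, hε, hbad⟩ := hno
      have hQex : ∀ N : ℕ, ∃ Q : ℕ, 1 ≤ Q ∧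
          ∀ m : ℤ, |m| ≤ (N:ℤ) → ∀ k : ℤ, y (m + k * (Q:ℤ)) = y m :=
        fun N => OxHelp.toeplitz_window hyT N
      choose Q hQ1 hQ2 using hQex
      choose k hk using fun N => hbad (Q N) (hQ1 N)
      have humem : ∀ N : ℕ, shiftZ (k N * (Q N : ℤ)) y ∈ orbitClosure (oxtoby p x) := fun N =>
        OxHelp.shiftZ_mem_orbitClosure hy _
      have hAinv : ∀ v ∈ orbitClosure (oxtoby p x), ∀ m : ℤ,
          shiftZ m v ∈ orbitClosure (oxtoby p x) :=
        fun v hv m => OxHelp.shiftZ_mem_orbitClosure hv m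
      have hulim : Tendsto (fun N : ℕ => shiftZ (k N * (Q N : ℤ)) y) atTop (𝓝 y) := by
        rw [tendsto_pi_nhds]
        intro m0
        refine tendsto_const_nhds.congr' ?_
        filter_upwards [eventually_ge_atTop m0.natAbs] with N hN
        have habs : |m0| ≤ (N:ℤ) := by
          rw [Int.abs_eq_natAbs]; exact_mod_cast hN
        exact (hQ2 N m0 habs (k N)).symm
      have hfy : Tendsto f (𝓝[orbitClosure (oxtoby p x)] y) (𝓝 (f y)) := hcont y hy
      have h2 : Tendsto (fun N : ℕ => f (shiftZ (k N * (Q N : ℤ)) y)) atTop (𝓝 (f y)) :=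
        hfy.comp (tendsto_nhdsWithin_iff.mpr ⟨hulim, Filter.Eventually.of_forall humem⟩)
      have h3 : Tendsto (fun N : ℕ => f (shiftZ (k N * (Q N : ℤ)) y) n) atTop (𝓝 (f y n)) :=
        (tendsto_pi_nhds.mp h2) n
      have h4 : ∀ N : ℕ, f (shiftZ (k N * (Q N : ℤ)) y) n = f y (n + k N * (Q N:ℤ)) := by
        intro N
        rw [OxHelp.conj_shift hcomm hAinv (k N * (Q N:ℤ)) y hy]
        rfl
      rw [Metric.tendsto_atTop] at h3
      obtain ⟨N0, hN0⟩ := h3 ε hε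
      have h6 := hN0 N0 le_rfl
      rw [h4 N0] at h6
      exact absurd h6 (not_lt.mpr (hk N0))
    have hT : Tendsto x' atTop (𝓝 (f y n)) := by
      rw [Metric.tendsto_atTop]
      intro ε hε
      obtain ⟨Q, hQ1, hQ⟩ := hRR ε hε
      obtain ⟨S0, hS0⟩ := OxHelp.gcd_stab hp hQ1
      refine ⟨S0 + 1, fun s hs => ?_⟩
      obtain ⟨i, rfl⟩ : ∃ i, s = i + 1 := ⟨s - 1, by omega⟩
      have hd : Nat.gcd Q (p i) = Nat.gcd Q (p (i+1)) := by
        rw [hS0 i (by omega), hS0 (i+1) (by omega)]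
      obtain ⟨kk, hkk⟩ := OxHelp.key hp hQ1 hd (hg (i+1)) (hcase (i+1))
      calc dist (x' (i+1)) (f y n) = dist (f y (n + kk * (Q:ℤ))) (f y n) := by rw [hkk]
        _ < ε := hQ kk
    obtain ⟨a, ha, b, hb, hab⟩ := hL'
    obtain ⟨φ, hφ, hφa⟩ := ha
    obtain ⟨ψ, hψ, hψb⟩ := hb
    have h7 : a = f y n := tendsto_nhds_unique hφa (hT.comp hφ.tendsto_atTop)
    have h8 : b = f y n := tendsto_nhds_unique hψb (hT.comp hψ.tendsto_atTop)
    exact hab (h7.trans h8.symm)
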